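/- The entry time of a controlled transition system satisfies the dynamic programming recursion: for q ∉ H⁻¹(O_s), J(T_S, O_s, O_t, q) = +∞; for q ∈ H⁻¹(O_t), J(T_S, O_s, O_t, q) = 0; and for q ∈ H⁻¹(O_s) \ H⁻¹(O_t), J(T_S, O_s, O_t, q) = 1 + max_{q' ∈ δ(q, S(q))} J(T_S, O_s, O_t, q'). -/

import Mathlib

open Set

/-- φ-contraction of a set in a metric space. -/
def contr {O : Type*} [MetricSpace O] (φ : ℝ) (s : Set O) : Set O :=
  {o' | o' ∈ s ∧ ∀ o : O, dist o o' ≤ φ → o ∈ s}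

/-- φ-expansion of a set in a metric space. -/
def expan {O : Type*} [MetricSpace O] (φ : ℝ) (s : Set O) : Set O :=
  {o : O | ∃ o' ∈ s, dist o o' ≤ φ}

/-- Enabled actions of a transition system given by δ. -/
def Enab {Q L : Type*} (δ : Q → L → Set Q) (q : Q) : Set L := {l | (δ q l).Nonempty}

/-- A trajectory of length N of the controlled system T_S. -/
def IsTraj {Q L : Type*} (δ : Q → L → Set Q) (S : Q → Set L) (N : ℕ)
    (q : ℕ → Q) (l : ℕ → L) : Prop :=
  ∀ i < N, l i ∈ S (q i) ∧ q (i + 1) ∈ δ (q i) (l i)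

/-- ε-approximate bisimulation relation. -/
def ApproxBisim {Q₁ Q₂ L O : Type*} [MetricSpace O] (ε : ℝ)
    (δ₁ : Q₁ → L → Set Q₁) (H₁ : Q₁ → O)
    (δ₂ : Q₂ → L → Set Q₂) (H₂ : Q₂ → O) (R : Set (Q₁ × Q₂)) : Prop :=
  ∀ p ∈ R, dist (H₁ p.1) (H₂ p.2) ≤ ε ∧
    (∀ l : L, ∀ q₁' ∈ δ₁ p.1 l, ∃ q₂' ∈ δ₂ p.2 l, (q₁', q₂') ∈ R) ∧
    (∀ l : L, ∀ q₂' ∈ δ₂ p.2 l, ∃ q₁' ∈ δ₁ p.1 l, (q₁', q₂') ∈ R)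

/-- Safety controller (characterization of Lemma 3.1). -/
def SafetyController {Q L O : Type*} (δ : Q → L → Set Q) (H : Q → O)
    (S : Q → Set L) (Os : Set O) : Prop :=
  ∀ q : Q, (S q).Nonempty → H q ∈ Os ∧ ∀ l ∈ S q, ∀ q' ∈ δ q l, (S q').Nonempty

/-- The reachability condition on a trajectory of length N. -/
def Reached {Q O : Type*} (H : Q → O) (Os Ot : Set O) (N : ℕ) (q : ℕ → Q) : Prop :=
  ∃ K ≤ N, (∀ k ≤ K, H (q k) ∈ Os) ∧ H (q K) ∈ Ot

/-- Entry time of the controlled system T_S from q₀ for specification (Os, Ot). -/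
noncomputable def entryTime {Q L O : Type*} (δ : Q → L → Set Q) (S : Q → Set L)
    (H : Q → O) (Os Ot : Set O) (q₀ : Q) : ℕ∞ :=
  sInf {n : ℕ∞ | ∃ N : ℕ, n = (N : ℕ∞) ∧
    ∀ (q : ℕ → Q) (l : ℕ → L), q 0 = q₀ → IsTraj δ S N q l → Reached H Os Ot N q}

/-- An everywhere non-empty, well-defined controller. -/
def IsController {Q L : Type*} (δ : Q → L → Set Q) (S : Q → Set L) : Prop :=
  (∀ q, (S q).Nonempty) ∧ ∀ q, S q ⊆ Enab δ q

/-- Time-optimal controller for reachability specification (Os, Ot). -/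
def TimeOptimal {Q L O : Type*} (δ : Q → L → Set Q) (H : Q → O) (S : Q → Set L)
    (Os Ot : Set O) : Prop :=
  IsController δ S ∧ ∀ S' : Q → Set L, IsController δ S' →
    ∀ q, entryTime δ S H Os Ot q ≤ entryTime δ S' H Os Ot q

/-- Maximal safety controller. -/
def MaximalSafety {Q L O : Type*} (δ : Q → L → Set Q) (H : Q → O) (S : Q → Set L)
    (Os : Set O) : Prop :=
  SafetyController δ H S Os ∧
    ∀ S' : Q → Set L, SafetyController δ H S' Os → ∀ q, S' q ⊆ S q

/-- ε-approximate bisimilarity of two transition systems. -/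
def ApproxBisimilar {Q₁ Q₂ L O : Type*} [MetricSpace O] (ε : ℝ)
    (δ₁ : Q₁ → L → Set Q₁) (H₁ : Q₁ → O)
    (δ₂ : Q₂ → L → Set Q₂) (H₂ : Q₂ → O) : Prop :=
  ∃ R : Set (Q₁ × Q₂), ApproxBisim ε δ₁ H₁ δ₂ H₂ R ∧
    (∀ q₁, ∃ q₂, (q₁, q₂) ∈ R) ∧ (∀ q₂, ∃ q₁, (q₁, q₂) ∈ R)

section EntryTimeAux

variable {Q L O : Type*} (δ : Q → L → Set Q) (S : Q → Set L) (H : Q → O) (Os Ot : Set O)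

/-- The defining predicate of `entryTime`. -/
def Pgood (q₀ : Q) (N : ℕ) : Prop :=
  ∀ (q : ℕ → Q) (l : ℕ → L), q 0 = q₀ → IsTraj δ S N q l → Reached H Os Ot N q

lemma entryTime_def' (q₀ : Q) :
    entryTime δ S H Os Ot q₀ =
      sInf {n : ℕ∞ | ∃ N : ℕ, n = (N : ℕ∞) ∧ Pgood δ S H Os Ot q₀ N} := rfl

lemma Pgood_mono {q₀ : Q} {N N' : ℕ} (h : N ≤ N') (hP : Pgood δ S H Os Ot q₀ N) :
    Pgood δ S H Os Ot q₀ N' := by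
  intro q l h0 ht
  obtain ⟨K, hK, h1, h2⟩ := hP q l h0 (fun i hi => ht i (lt_of_lt_of_le hi h))
  exact ⟨K, hK.trans h, h1, h2⟩

lemma entryTime_le_iff (q₀ : Q) (M : ℕ) :
    entryTime δ S H Os Ot q₀ ≤ (M : ℕ∞) ↔ Pgood δ S H Os Ot q₀ M := by
  constructor
  · intro h
    by_contra hM
    have hge : (M : ℕ∞) + 1 ≤ entryTime δ S H Os Ot q₀ := by
      rw [entryTime_def']
      apply le_sInf
      rintro n ⟨N, rfl, hN⟩
      by_contra hlt
      push_neg at hlt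
      have hNM : N ≤ M := by
        have h1 : (N : ℕ∞) < ((M + 1 : ℕ) : ℕ∞) := by push_cast; exact hlt
        exact Nat.lt_succ_iff.mp (by exact_mod_cast h1)
      exact hM (Pgood_mono δ S H Os Ot hNM hN)
    have h2 : (M : ℕ∞) + 1 ≤ (M : ℕ∞) := hge.trans h
    have h3 : ((M + 1 : ℕ) : ℕ∞) ≤ ((M : ℕ) : ℕ∞) := by push_cast; exact h2
    have h4 : M + 1 ≤ M := by exact_mod_cast h3
    omega
  · intro h
    rw [entryTime_def']
    exact sInf_le ⟨M, rfl, h⟩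

lemma exists_inf_traj (hSne : ∀ q, (S q).Nonempty) (hSwd : ∀ q, S q ⊆ Enab δ q) (q₀ : Q) :
    ∃ (q : ℕ → Q) (l : ℕ → L), q 0 = q₀ ∧ ∀ i, l i ∈ S (q i) ∧ q (i + 1) ∈ δ (q i) (l i) := by
  have hstep : ∀ p : Q, ∃ x : L × Q, x.1 ∈ S p ∧ x.2 ∈ δ p x.1 := by
    intro p
    obtain ⟨l, hl⟩ := hSne p
    obtain ⟨q', hq'⟩ := hSwd p hl
    exact ⟨(l, q'), hl, hq'⟩
  choose f hf1 hf2 using hstep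
  refine ⟨fun n => (fun p => (f p).2)^[n] q₀,
    fun n => (f ((fun p => (f p).2)^[n] q₀)).1, rfl, fun i => ⟨hf1 _, ?_⟩⟩
  show (fun p => (f p).2)^[i + 1] q₀ ∈ _
  rw [Function.iterate_succ_apply']
  exact hf2 _

end EntryTimeAux

theorem entry_time_recursion {Q L O : Type*}
    (δ : Q → L → Set Q) (H : Q → O) (S : Q → Set L) (Os Ot : Set O)
    (hOts : Ot ⊆ Os)
    (hnb : ∀ q : Q, ∃ l : L, (δ q l).Nonempty)
    (hSne : ∀ q, (S q).Nonempty) (hSwd : ∀ q, S q ⊆ Enab δ q) :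
    (∀ q : Q, H q ∉ Os → entryTime δ S H Os Ot q = ⊤) ∧
    (∀ q : Q, H q ∈ Ot → entryTime δ S H Os Ot q = 0) ∧
    (∀ q : Q, H q ∈ Os → H q ∉ Ot →
      entryTime δ S H Os Ot q =
        1 + ⨆ l ∈ S q, ⨆ q' ∈ δ q l, entryTime δ S H Os Ot q') := by
  refine ⟨?_, ?_, ?_⟩
  · -- unsafe initial state: entry time is ⊤
    intro q hq
    rw [entryTime_def']
    have hempty : {n : ℕ∞ | ∃ N : ℕ, n = (N : ℕ∞) ∧ Pgood δ S H Os Ot q N} = ∅ := by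
      rw [Set.eq_empty_iff_forall_notMem]
      rintro n ⟨N, rfl, hN⟩
      obtain ⟨qs, ls, h0, ht⟩ := exists_inf_traj δ S hSne hSwd q
      obtain ⟨K, _, hOs, _⟩ := hN qs ls h0 (fun i _ => ht i)
      exact hq (h0 ▸ hOs 0 (Nat.zero_le K))
    rw [hempty, sInf_empty]
  · -- target initial state: entry time is 0
    intro q hq
    have h0 : Pgood δ S H Os Ot q 0 := by
      intro qs ls h0 _
      exact ⟨0, le_refl 0, fun k hk => by
        interval_cases k
        exact h0 ▸ hOts hq, h0 ▸ hq⟩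
    have := (entryTime_le_iff δ S H Os Ot q 0).mpr h0
    simpa using this
  · -- recursion step
    intro q hqs hqt
    set J := entryTime δ S H Os Ot with hJ
    set R := ⨆ l ∈ S q, ⨆ q' ∈ δ q l, J q' with hR
    have hsucc_le : ∀ l ∈ S q, ∀ q' ∈ δ q l, J q' ≤ R := by
      intro l hl q' hq'
      calc J q' ≤ ⨆ q' ∈ δ q l, J q' := le_biSup _ hq'
        _ ≤ R := le_biSup (f := fun l => ⨆ q' ∈ δ q l, J q') hl
    apply le_antisymm
    · -- J q ≤ 1 + R
      rcases eq_or_ne R ⊤ with hRtop | hRtop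
      · rw [hRtop]
        simp
      · obtain ⟨M, hM⟩ := WithTop.ne_top_iff_exists.mp hRtop
        rw [← hM] at hsucc_le ⊢
        have hP : ∀ l ∈ S q, ∀ q' ∈ δ q l, Pgood δ S H Os Ot q' M := by
          intro l hl q' hq'
          exact (entryTime_le_iff δ S H Os Ot q' M).mp (hsucc_le l hl q' hq')
        have hPq : Pgood δ S H Os Ot q (M + 1) := by
          intro qs ls h0 ht
          have h00 := ht 0 (Nat.succ_pos M)
          rw [h0] at h00
          have htshift : IsTraj δ S M (fun i => qs (i + 1)) (fun i => ls (i + 1)) :=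
            fun i hi => ht (i + 1) (by omega)
          obtain ⟨K, hK, hKOs, hKOt⟩ :=
            hP (ls 0) h00.1 (qs 1) h00.2 (fun i => qs (i + 1)) (fun i => ls (i + 1)) rfl htshift
          refine ⟨K + 1, by omega, fun k hk => ?_, hKOt⟩
          match k with
          | 0 => exact h0 ▸ hqs
          | j + 1 => exact hKOs j (by omega)
        have := (entryTime_le_iff δ S H Os Ot q (M + 1)).mpr hPq
        rw [← hJ] at this
        calc J q ≤ ((M + 1 : ℕ) : ℕ∞) := this
          _ = 1 + (M : ℕ∞) := by push_cast; ring

    · -- 1 + R ≤ J q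
      rcases eq_or_ne (J q) ⊤ with hJtop | hJtop
      · rw [hJtop]; exact le_top
      · have hJle : J q ≤ J q := le_refl _
        obtain ⟨N, hN⟩ := WithTop.ne_top_iff_exists.mp hJtop
        have hPN : Pgood δ S H Os Ot q N :=
          (entryTime_le_iff δ S H Os Ot q N).mp (le_of_eq hN.symm)
        obtain ⟨l₀, hl₀⟩ := hSne q
        have hN0 : N ≠ 0 := by
          rintro rfl
          obtain ⟨K, hK, _, hKOt⟩ :=
            hPN (fun _ => q) (fun _ => l₀) rfl (fun i hi => absurd hi (Nat.not_lt_zero i))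
          interval_cases K
          exact hqt hKOt
        obtain ⟨M, rfl⟩ := Nat.exists_eq_succ_of_ne_zero hN0
        have hPsucc : ∀ l ∈ S q, ∀ q' ∈ δ q l, Pgood δ S H Os Ot q' M := by
          intro l hl q' hq' qs ls h0 ht
          set qs' : ℕ → Q := fun i => Nat.casesOn i q qs with hqs'
          set ls' : ℕ → L := fun i => Nat.casesOn i l ls with hls'
          have ht' : IsTraj δ S (M + 1) qs' ls' := by
            intro i hi
            match i with
            | 0 => exact ⟨hl, by simpa [hqs', hls', h0] using hq'⟩
            | j + 1 => exact ht j (by omega)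
          obtain ⟨K, hK, hKOs, hKOt⟩ := hPN qs' ls' rfl ht'
          match K with
          | 0 => exact absurd hKOt hqt
          | K' + 1 =>
            exact ⟨K', by omega, fun k hk => hKOs (k + 1) (by omega), hKOt⟩
        have hRle : R ≤ (M : ℕ∞) := by
          rw [hR]
          apply iSup₂_le
          intro l hl
          apply iSup₂_le
          intro q' hq'
          exact (entryTime_le_iff δ S H Os Ot q' M).mpr (hPsucc l hl q' hq')
        calc 1 + R ≤ 1 + (M : ℕ∞) := by exact add_le_add_right hRle 1
          _ = ((M + 1 : ℕ) : ℕ∞) := by push_cast; ring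
          _ = J q := by first | exact_mod_cast hN | exact_mod_cast hN.symm
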